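/- Let A = {−1,1} and let r ≥ 5 with r ≡ 2 (mod 4), and set m = ⌊(3r−4)/4⌋. Then s_A(C_3^r) ≥ 2·Σ binom(r, j) + 2·binom(r, (r−2)/2) + 1, where the sum is over odd j with 1 ≤ j ≤ m. -/

import Mathlib

/-- A multiset `S` over an additive abelian group `G` has an `A`-zero-sum subsequence
of length `k`, for the weight set `A = {-1, 1}`: there is a sub-multiset of `S` of
cardinality `k` that splits as `t₁ + t₂` with `t₁.sum - t₂.sum = 0` (the elements of
`t₁` receive the weight `+1` and those of `t₂` the weight `-1`). -/
def HasWZSS {G : Type*} [AddCommGroup G] (S : Multiset G) (k : ℕ) : Prop :=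
  ∃ t₁ t₂ : Multiset G, t₁ + t₂ ≤ S ∧ Multiset.card (t₁ + t₂) = k ∧ t₁.sum = t₂.sum

/-- `sA G` is the smallest `ℓ` such that every sequence over `G` of length at least `ℓ`
has an `{-1,1}`-zero-sum subsequence of length `exp G`. -/
noncomputable def sA (G : Type*) [AddCommGroup G] : ℕ :=
  sInf {ℓ : ℕ | ∀ S : Multiset G, ℓ ≤ Multiset.card S →
    HasWZSS S (AddMonoid.exponent G)}

/-- `etaA G` is the smallest `ℓ` such that every sequence over `G` of length at least `ℓ`
has a nonempty `{-1,1}`-zero-sum subsequence of length at most `exp G`. -/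
noncomputable def etaA (G : Type*) [AddCommGroup G] : ℕ :=
  sInf {ℓ : ℕ | ∀ S : Multiset G, ℓ ≤ Multiset.card S →
    ∃ k, 1 ≤ k ∧ k ≤ AddMonoid.exponent G ∧ HasWZSS S k}

/-- `gA G` is the smallest `ℓ` such that every sequence over `G` of length at least `ℓ`
consisting of pairwise distinct elements has an `{-1,1}`-zero-sum subsequence of
length `exp G`. -/
noncomputable def gA (G : Type*) [AddCommGroup G] : ℕ :=
  sInf {ℓ : ℕ | ∀ S : Multiset G, ℓ ≤ Multiset.card S → S.Nodup →
    HasWZSS S (AddMonoid.exponent G)}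

namespace SAWork

def vec {r : ℕ} (δ : ZMod 3) (A : Finset (Fin r)) : Fin r → ZMod 3 :=
  fun i => δ + if i ∈ A then 1 else 0

lemma indsum {r : ℕ} (A : Finset (Fin r)) :
    ∑ i : Fin r, (if i ∈ A then (1:ℤ) else 0) = A.card := by
  rw [Finset.sum_boole]
  simp

lemma lin {r : ℕ} (A B C : Finset (Fin r)) (e₁ e₂ e₃ d₁ d₂ d₃ : ZMod 3)
    (l₁ l₂ l₃ mu : ℤ)
    (hP : ∀ u v w : Bool,
      e₁ * (d₁ + (if u then 1 else 0)) + e₂ * (d₂ + (if v then 1 else 0))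
        + e₃ * (d₃ + (if w then 1 else 0)) = 0 →
      l₁ * (if u then 1 else 0) + l₂ * (if v then 1 else 0)
        + l₃ * (if w then 1 else 0) = mu)
    (heq : ∀ i, e₁ * vec d₁ A i + e₂ * vec d₂ B i + e₃ * vec d₃ C i = 0) :
    l₁ * A.card + l₂ * B.card + l₃ * C.card = mu * r := by
  have key : ∀ i : Fin r,
      l₁ * (if i ∈ A then (1:ℤ) else 0) + l₂ * (if i ∈ B then 1 else 0)
        + l₃ * (if i ∈ C then 1 else 0) = mu := by
    intro i
    have h := heq i
    simp only [vec] at h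
    have h2 := hP (decide (i ∈ A)) (decide (i ∈ B)) (decide (i ∈ C))
    simp only [decide_eq_true_eq] at h2
    exact h2 h
  have hsum : ∑ i : Fin r,
      (l₁ * (if i ∈ A then (1:ℤ) else 0) + l₂ * (if i ∈ B then 1 else 0)
        + l₃ * (if i ∈ C then 1 else 0)) = ∑ _i : Fin r, mu :=
    Finset.sum_congr rfl fun i _ => key i
  rw [Finset.sum_add_distrib, Finset.sum_add_distrib, ← Finset.mul_sum,
    ← Finset.mul_sum, ← Finset.mul_sum, indsum, indsum, indsum,
    Finset.sum_const, Finset.card_univ, Fintype.card_fin] at hsum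
  rw [hsum]; push_cast; ring


def Good (r m : ℕ) (x : Fin r → ZMod 3) : Prop :=
  ∃ δ A, x = vec δ A ∧
    ((δ = 0 ∧ A.card % 2 = 1 ∧ A.card ≤ m) ∨ (δ = 1 ∧ 2 * A.card + 2 = r))

lemma key (r m : ℕ) (hr : 6 ≤ r) (hm : 4 * m + 6 = 3 * r)
    (a b c : Fin r → ZMod 3) (ha : Good r m a) (hb : Good r m b) (hc : Good r m c)
    (hne : ¬(a = b ∧ b = c))
    (e₁ e₂ e₃ : ZMod 3) (he₁ : e₁ = 1 ∨ e₁ = 2) (he₂ : e₂ = 1 ∨ e₂ = 2)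
    (he₃ : e₃ = 1 ∨ e₃ = 2)
    (heq : ∀ i, e₁ * a i + e₂ * b i + e₃ * c i = 0) : False := by
  obtain ⟨d₁, A, rfl, hA⟩ := ha
  obtain ⟨d₂, B, rfl, hB⟩ := hb
  obtain ⟨d₃, C, rfl, hC⟩ := hc
  rcases hA with ⟨rfl, hA1, hA2⟩ | ⟨rfl, hA1⟩ <;>
  rcases hB with ⟨rfl, hB1, hB2⟩ | ⟨rfl, hB1⟩ <;>
  rcases hC with ⟨rfl, hC1, hC2⟩ | ⟨rfl, hC1⟩ <;>
  rcases he₁ with rfl | rfl <;>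
  rcases he₂ with rfl | rfl <;>
  rcases he₃ with rfl | rfl
  · apply hne
    have hk : ∀ i : Fin r, (i ∈ A ↔ i ∈ B) ∧ (i ∈ B ↔ i ∈ C) := by
      intro i
      have h := heq i
      simp only [vec] at h
      by_cases hu : i ∈ A <;> by_cases hv : i ∈ B <;> by_cases hw : i ∈ C <;>
        simp [hu, hv, hw] at h ⊢ <;> revert h <;> decide
    have hAB : A = B := Finset.ext fun i => (hk i).1
    have hBC : B = C := Finset.ext fun i => (hk i).2
    exact ⟨by rw [hAB], by rw [hBC]⟩
  · have hl := lin A B C 1 1 2 0 0 0 (-2) (-2) 2 0 (by decide) heq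
    omega
  · have hl := lin A B C 1 2 1 0 0 0 (-2) 2 (-2) 0 (by decide) heq
    omega
  · have hl := lin A B C 1 2 2 0 0 0 (-2) 2 2 0 (by decide) heq
    omega
  · have hl := lin A B C 2 1 1 0 0 0 (-2) 2 2 0 (by decide) heq
    omega
  · have hl := lin A B C 2 1 2 0 0 0 (-2) 2 (-2) 0 (by decide) heq
    omega
  · have hl := lin A B C 2 2 1 0 0 0 (-2) (-2) 2 0 (by decide) heq
    omega
  · apply hne
    have hk : ∀ i : Fin r, (i ∈ A ↔ i ∈ B) ∧ (i ∈ B ↔ i ∈ C) := by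
      intro i
      have h := heq i
      simp only [vec] at h
      by_cases hu : i ∈ A <;> by_cases hv : i ∈ B <;> by_cases hw : i ∈ C <;>
        simp [hu, hv, hw] at h ⊢ <;> revert h <;> decide
    have hAB : A = B := Finset.ext fun i => (hk i).1
    have hBC : B = C := Finset.ext fun i => (hk i).2
    exact ⟨by rw [hAB], by rw [hBC]⟩
  · have hl := lin A B C 1 1 1 0 0 1 (-1) (-1) (-1) (-2) (by decide) heq
    omega
  · have hl := lin A B C 1 1 2 0 0 1 (-2) (-2) 2 (-2) (by decide) heq
    omega
  · have hl := lin A B C 1 2 1 0 0 1 (-2) (-1) 1 (-1) (by decide) heq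
    omega
  · have hl := lin A B C 1 2 2 0 0 1 (-2) (-1) (-1) (-2) (by decide) heq
    omega
  · have hl := lin A B C 2 1 1 0 0 1 (-2) (-1) (-1) (-2) (by decide) heq
    omega
  · have hl := lin A B C 2 1 2 0 0 1 (-2) (-1) 1 (-1) (by decide) heq
    omega
  · have hl := lin A B C 2 2 1 0 0 1 (-2) (-2) 2 (-2) (by decide) heq
    omega
  · have hl := lin A B C 2 2 2 0 0 1 (-1) (-1) (-1) (-2) (by decide) heq
    omega
  · have hl := lin A B C 1 1 1 0 1 0 (-1) (-1) (-1) (-2) (by decide) heq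
    omega
  · have hl := lin A B C 1 1 2 0 1 0 (-2) 1 (-1) (-1) (by decide) heq
    omega
  · have hl := lin A B C 1 2 1 0 1 0 (-2) 2 (-2) (-2) (by decide) heq
    omega
  · have hl := lin A B C 1 2 2 0 1 0 (-2) (-2) 0 (-2) (by decide) heq
    omega
  · have hl := lin A B C 2 1 1 0 1 0 (-2) (-2) 0 (-2) (by decide) heq
    omega
  · have hl := lin A B C 2 1 2 0 1 0 (-2) 2 (-2) (-2) (by decide) heq
    omega
  · have hl := lin A B C 2 2 1 0 1 0 (-2) 1 (-1) (-1) (by decide) heq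
    omega
  · have hl := lin A B C 2 2 2 0 1 0 (-1) (-1) (-1) (-2) (by decide) heq
    omega
  · have hl := lin A B C 1 1 1 0 1 1 (-2) (-2) (-2) (-2) (by decide) heq
    omega
  · have hl := lin A B C 1 1 2 0 1 1 (-2) (-2) 2 0 (by decide) heq
    omega
  · have hl := lin A B C 1 2 1 0 1 1 (-2) 2 (-2) 0 (by decide) heq
    omega
  · have hl := lin A B C 1 2 2 0 1 1 (-2) 2 2 2 (by decide) heq
    omega
  · have hl := lin A B C 2 1 1 0 1 1 (-2) 2 2 2 (by decide) heq
    omega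
  · have hl := lin A B C 2 1 2 0 1 1 (-2) 2 (-2) 0 (by decide) heq
    omega
  · have hl := lin A B C 2 2 1 0 1 1 (-2) (-2) 2 0 (by decide) heq
    omega
  · have hl := lin A B C 2 2 2 0 1 1 (-2) (-2) (-2) (-2) (by decide) heq
    omega
  · have hl := lin A B C 1 1 1 1 0 0 (-1) (-1) (-1) (-2) (by decide) heq
    omega
  · have hl := lin A B C 1 1 2 1 0 0 (-2) 0 (-2) (-2) (by decide) heq
    omega
  · have hl := lin A B C 1 2 1 1 0 0 (-2) (-2) 0 (-2) (by decide) heq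
    omega
  · have hl := lin A B C 1 2 2 1 0 0 (-2) 2 2 2 (by decide) heq
    omega
  · have hl := lin A B C 2 1 1 1 0 0 (-2) 2 2 2 (by decide) heq
    omega
  · have hl := lin A B C 2 1 2 1 0 0 (-2) (-2) 0 (-2) (by decide) heq
    omega
  · have hl := lin A B C 2 2 1 1 0 0 (-2) 0 (-2) (-2) (by decide) heq
    omega
  · have hl := lin A B C 2 2 2 1 0 0 (-1) (-1) (-1) (-2) (by decide) heq
    omega
  · have hl := lin A B C 1 1 1 1 0 1 (-2) (-2) (-2) (-2) (by decide) heq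
    omega
  · have hl := lin A B C 1 1 2 1 0 1 (-2) (-2) 2 0 (by decide) heq
    omega
  · have hl := lin A B C 1 2 1 1 0 1 (-2) 2 (-2) (-2) (by decide) heq
    omega
  · have hl := lin A B C 1 2 2 1 0 1 (-2) 2 2 0 (by decide) heq
    omega
  · have hl := lin A B C 2 1 1 1 0 1 (-2) 2 2 0 (by decide) heq
    omega
  · have hl := lin A B C 2 1 2 1 0 1 (-2) 2 (-2) (-2) (by decide) heq
    omega
  · have hl := lin A B C 2 2 1 1 0 1 (-2) (-2) 2 0 (by decide) heq
    omega
  · have hl := lin A B C 2 2 2 1 0 1 (-2) (-2) (-2) (-2) (by decide) heq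
    omega
  · have hl := lin A B C 1 1 1 1 1 0 (-2) (-2) (-2) (-2) (by decide) heq
    omega
  · have hl := lin A B C 1 1 2 1 1 0 (-2) (-2) 2 (-2) (by decide) heq
    omega
  · have hl := lin A B C 1 2 1 1 1 0 (-2) 2 (-2) 0 (by decide) heq
    omega
  · have hl := lin A B C 1 2 2 1 1 0 (-2) 2 2 0 (by decide) heq
    omega
  · have hl := lin A B C 2 1 1 1 1 0 (-2) 2 2 0 (by decide) heq
    omega
  · have hl := lin A B C 2 1 2 1 1 0 (-2) 2 (-2) 0 (by decide) heq
    omega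
  · have hl := lin A B C 2 2 1 1 1 0 (-2) (-2) 2 (-2) (by decide) heq
    omega
  · have hl := lin A B C 2 2 2 1 1 0 (-2) (-2) (-2) (-2) (by decide) heq
    omega
  · apply hne
    have hk : ∀ i : Fin r, (i ∈ A ↔ i ∈ B) ∧ (i ∈ B ↔ i ∈ C) := by
      intro i
      have h := heq i
      simp only [vec] at h
      by_cases hu : i ∈ A <;> by_cases hv : i ∈ B <;> by_cases hw : i ∈ C <;>
        simp [hu, hv, hw] at h ⊢ <;> revert h <;> decide
    have hAB : A = B := Finset.ext fun i => (hk i).1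
    have hBC : B = C := Finset.ext fun i => (hk i).2
    exact ⟨by rw [hAB], by rw [hBC]⟩
  · have hl := lin A B C 1 1 2 1 1 1 (-2) 0 (-2) (-2) (by decide) heq
    omega
  · have hl := lin A B C 1 2 1 1 1 1 (-2) (-2) 0 (-2) (by decide) heq
    omega
  · have hl := lin A B C 1 2 2 1 1 1 (-2) (-2) 0 (-2) (by decide) heq
    omega
  · have hl := lin A B C 2 1 1 1 1 1 (-2) (-2) 0 (-2) (by decide) heq
    omega
  · have hl := lin A B C 2 1 2 1 1 1 (-2) (-2) 0 (-2) (by decide) heq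
    omega
  · have hl := lin A B C 2 2 1 1 1 1 (-2) 0 (-2) (-2) (by decide) heq
    omega
  · apply hne
    have hk : ∀ i : Fin r, (i ∈ A ↔ i ∈ B) ∧ (i ∈ B ↔ i ∈ C) := by
      intro i
      have h := heq i
      simp only [vec] at h
      by_cases hu : i ∈ A <;> by_cases hv : i ∈ B <;> by_cases hw : i ∈ C <;>
        simp [hu, hv, hw] at h ⊢ <;> revert h <;> decide
    have hAB : A = B := Finset.ext fun i => (hk i).1
    have hBC : B = C := Finset.ext fun i => (hk i).2
    exact ⟨by rw [hAB], by rw [hBC]⟩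

def T1 (r m : ℕ) : Finset (Finset (Fin r)) :=
  ((Finset.Icc 1 m).filter (fun j => Odd j)).biUnion
    (fun j => Finset.powersetCard j Finset.univ)

def T2 (r : ℕ) : Finset (Finset (Fin r)) :=
  Finset.powersetCard ((r - 2) / 2) Finset.univ

def M (r m : ℕ) : Multiset (Fin r → ZMod 3) :=
  (T1 r m).val.map (vec 0) + (T2 r).val.map (vec 1)

def Sc (r m : ℕ) : Multiset (Fin r → ZMod 3) := M r m + M r m

lemma mem_T1 {r m : ℕ} {A : Finset (Fin r)} :
    A ∈ T1 r m ↔ A.card % 2 = 1 ∧ A.card ≤ m := by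
  simp only [T1, Finset.mem_biUnion, Finset.mem_filter, Finset.mem_Icc,
    Finset.mem_powersetCard_univ]
  constructor
  · rintro ⟨j, ⟨⟨h1, h2⟩, hodd⟩, hj⟩
    subst hj
    exact ⟨Nat.odd_iff.1 hodd, h2⟩
  · rintro ⟨h1, h2⟩
    exact ⟨A.card, ⟨⟨by omega, h2⟩, Nat.odd_iff.2 h1⟩, rfl⟩

lemma mem_T2 {r : ℕ} {A : Finset (Fin r)} :
    A ∈ T2 r ↔ A.card = (r - 2) / 2 :=
  Finset.mem_powersetCard_univ

lemma vec_inj {r : ℕ} (δ : ZMod 3) : Function.Injective (vec (r := r) δ) := by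
  intro A B h
  ext i
  have h1 := congrFun h i
  simp only [vec, add_right_inj] at h1
  by_cases hA : i ∈ A <;> by_cases hB : i ∈ B <;>
    simp [hA, hB] at h1 ⊢ <;> revert h1 <;> decide

lemma not_both {r m : ℕ} (hmr : m < r) {A C : Finset (Fin r)} (hA : A.card ≤ m) :
    vec 0 A ≠ vec 1 C := by
  intro h
  obtain ⟨i, hi⟩ : ∃ i, i ∉ A := by
    by_contra hh
    push_neg at hh
    have : A = Finset.univ := Finset.eq_univ_iff_forall.2 hh
    rw [this, Finset.card_univ, Fintype.card_fin] at hA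
    omega
  have h2 := congrFun h i
  simp only [vec, hi, if_neg, not_false_iff] at h2
  by_cases hC : i ∈ C <;> simp [hC] at h2 <;> revert h2 <;> decide

lemma nodup_M {r m : ℕ} (hmr : m < r) : (M r m).Nodup := by
  rw [M, Multiset.nodup_add]
  refine ⟨Multiset.Nodup.map (vec_inj 0) (T1 r m).nodup,
    Multiset.Nodup.map (vec_inj 1) (T2 r).nodup, ?_⟩
  rw [Multiset.disjoint_left]
  intro x hx1 hx2
  obtain ⟨A, hA, rfl⟩ := Multiset.mem_map.1 hx1
  obtain ⟨C, hC, hvec⟩ := Multiset.mem_map.1 hx2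
  exact not_both hmr (mem_T1.1 hA).2 hvec.symm

lemma count_Sc_le {r m : ℕ} (hmr : m < r) (x : Fin r → ZMod 3) :
    (Sc r m).count x ≤ 2 := by
  have h1 : (M r m).count x ≤ 1 := Multiset.nodup_iff_count_le_one.1 (nodup_M hmr) x
  rw [Sc, Multiset.count_add]
  omega

lemma good_of_mem {r m : ℕ} (hr : 6 ≤ r) (hr2 : r % 2 = 0) {x : Fin r → ZMod 3}
    (hx : x ∈ M r m) : Good r m x := by
  rcases Multiset.mem_add.1 hx with h | h
  · obtain ⟨A, hA, rfl⟩ := Multiset.mem_map.1 h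
    exact ⟨0, A, rfl, Or.inl ⟨rfl, (mem_T1.1 hA).1, (mem_T1.1 hA).2⟩⟩
  · obtain ⟨C, hC, rfl⟩ := Multiset.mem_map.1 h
    refine ⟨1, C, rfl, Or.inr ⟨rfl, ?_⟩⟩
    have := mem_T2.1 (show C ∈ T2 r from hC)
    omega

lemma noW {r m : ℕ} (hr : 6 ≤ r) (hm : 4 * m + 6 = 3 * r) :
    ¬ HasWZSS (Sc r m) 3 := by
  rintro ⟨t₁, t₂, hle, hcard, hsum⟩
  have hmr : m < r := by omega
  have hr2 : r % 2 = 0 := by omega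
  have h3 : (3 : ZMod 3) = 0 := by decide
  have hgood : ∀ x ∈ Sc r m, Good r m x := by
    intro x hx
    rcases Multiset.mem_add.1 hx with h | h <;> exact good_of_mem hr hr2 h
  have hthree : ∀ x : Fin r → ZMod 3, ¬ (x ::ₘ x ::ₘ {x}) ≤ Sc r m := by
    intro x hx
    have h1 := Multiset.le_iff_count.1 hx x
    simp [Multiset.count_cons, Multiset.count_singleton] at h1
    have h2 := count_Sc_le hmr x
    omega
  rw [Multiset.card_add] at hcard
  have hsplit : Multiset.card t₁ = 0 ∨ Multiset.card t₁ = 1 ∨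
      Multiset.card t₁ = 2 ∨ Multiset.card t₁ = 3 := by omega
  rcases hsplit with h0 | h1 | h2 | hfull
  · -- t₁ = 0, t₂ = {x,y,z}
    have : Multiset.card t₂ = 3 := by omega
    rw [Multiset.card_eq_zero] at h0
    subst h0
    obtain ⟨x, y, z, rfl⟩ := Multiset.card_eq_three.1 this
    rw [zero_add] at hle
    simp only [Multiset.sum_zero, Multiset.insert_eq_cons, Multiset.sum_cons,
      Multiset.sum_singleton] at hsum
    by_cases hxyz : x = y ∧ y = z
    · obtain ⟨rfl, rfl⟩ := hxyz
      exact hthree x hle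
    refine key r m hr hm x y z ?_ ?_ ?_ hxyz 1 1 1 (Or.inl rfl) (Or.inl rfl)
      (Or.inl rfl) ?_
    · exact hgood x (Multiset.mem_of_le hle (by simp))
    · exact hgood y (Multiset.mem_of_le hle (by simp))
    · exact hgood z (Multiset.mem_of_le hle (by simp))
    · intro i
      have h := congrFun hsum i
      simp only [Pi.add_apply, Pi.zero_apply] at h
      linear_combination (-1 : ZMod 3) * h
  · -- t₁ = {x}, t₂ = {y,z}
    obtain ⟨x, rfl⟩ := Multiset.card_eq_one.1 h1
    have : Multiset.card t₂ = 2 := by omega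
    obtain ⟨y, z, rfl⟩ := Multiset.card_eq_two.1 this
    rw [Multiset.singleton_add] at hle
    simp only [Multiset.sum_singleton, Multiset.insert_eq_cons, Multiset.sum_cons] at hsum
    by_cases hxyz : x = y ∧ y = z
    · obtain ⟨rfl, rfl⟩ := hxyz
      exact hthree x hle
    refine key r m hr hm x y z ?_ ?_ ?_ hxyz 1 2 2 (Or.inl rfl) (Or.inr rfl)
      (Or.inr rfl) ?_
    · exact hgood x (Multiset.mem_of_le hle (by simp))
    · exact hgood y (Multiset.mem_of_le hle (by simp))
    · exact hgood z (Multiset.mem_of_le hle (by simp))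
    · intro i
      have h := congrFun hsum i
      simp only [Pi.add_apply] at h
      linear_combination h + (y i + z i) * h3
  · -- t₁ = {x,y}, t₂ = {z}
    obtain ⟨x, y, rfl⟩ := Multiset.card_eq_two.1 h2
    have : Multiset.card t₂ = 1 := by omega
    obtain ⟨z, rfl⟩ := Multiset.card_eq_one.1 this
    simp only [Multiset.insert_eq_cons, Multiset.cons_add, Multiset.singleton_add] at hle
    simp only [Multiset.sum_singleton, Multiset.insert_eq_cons, Multiset.sum_cons] at hsum
    by_cases hxyz : x = y ∧ y = z
    · obtain ⟨rfl, rfl⟩ := hxyz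
      exact hthree x hle
    refine key r m hr hm x y z ?_ ?_ ?_ hxyz 1 1 2 (Or.inl rfl) (Or.inl rfl)
      (Or.inr rfl) ?_
    · exact hgood x (Multiset.mem_of_le hle (by simp))
    · exact hgood y (Multiset.mem_of_le hle (by simp))
    · exact hgood z (Multiset.mem_of_le hle (by simp))
    · intro i
      have h := congrFun hsum i
      simp only [Pi.add_apply] at h
      linear_combination h + z i * h3
  · -- t₁ = {x,y,z}, t₂ = 0
    obtain ⟨x, y, z, rfl⟩ := Multiset.card_eq_three.1 hfull
    have : Multiset.card t₂ = 0 := by omega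
    rw [Multiset.card_eq_zero] at this
    subst this
    rw [add_zero] at hle
    simp only [Multiset.sum_zero, Multiset.insert_eq_cons, Multiset.sum_cons,
      Multiset.sum_singleton] at hsum
    by_cases hxyz : x = y ∧ y = z
    · obtain ⟨rfl, rfl⟩ := hxyz
      exact hthree x hle
    refine key r m hr hm x y z ?_ ?_ ?_ hxyz 1 1 1 (Or.inl rfl) (Or.inl rfl)
      (Or.inl rfl) ?_
    · exact hgood x (Multiset.mem_of_le hle (by simp))
    · exact hgood y (Multiset.mem_of_le hle (by simp))
    · exact hgood z (Multiset.mem_of_le hle (by simp))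
    · intro i
      have h := congrFun hsum i
      simp only [Pi.add_apply, Pi.zero_apply] at h
      linear_combination h

lemma exp_eq {r : ℕ} (hr : 1 ≤ r) : AddMonoid.exponent (Fin r → ZMod 3) = 3 := by
  have h3 : ∀ x : Fin r → ZMod 3, 3 • x = 0 := by
    intro x
    funext i
    show (3 : ℕ) • x i = 0
    rw [nsmul_eq_mul]
    rw [show ((3 : ℕ) : ZMod 3) = 0 from rfl, zero_mul]
  have hdvd := AddMonoid.exponent_dvd_of_forall_nsmul_eq_zero h3
  rcases (Nat.prime_three.eq_one_or_self_of_dvd _ hdvd) with h1 | h1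
  · exfalso
    have hx := AddMonoid.exponent_nsmul_eq_zero (G := Fin r → ZMod 3)
      (fun _ => 1)
    rw [h1, one_nsmul] at hx
    have := congrFun hx ⟨0, by omega⟩
    simp at this
  · exact h1

lemma pigeonhole {G : Type*} [AddCommGroup G] [Fintype G] [DecidableEq G]
    (hG : ∀ x : G, x + x + x = 0) (S : Multiset G)
    (hS : 2 * Fintype.card G + 1 ≤ Multiset.card S) : HasWZSS S 3 := by
  have hex : ∃ x, 3 ≤ S.count x := by
    by_contra h
    push_neg at h
    have h1 := Multiset.toFinset_sum_count_eq S
    have h2 : ∑ x ∈ S.toFinset, S.count x ≤ ∑ _x ∈ S.toFinset, 2 :=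
      Finset.sum_le_sum (fun x _ => by have := h x; omega)
    rw [Finset.sum_const, smul_eq_mul] at h2
    have h3 : S.toFinset.card ≤ Fintype.card G := Finset.card_le_univ _
    omega
  obtain ⟨x, hx⟩ := hex
  refine ⟨{x, x, x}, 0, ?_, by simp, ?_⟩
  · rw [add_zero, Multiset.le_iff_count]
    intro a
    by_cases ha : a = x
    · subst ha
      have hcx : Multiset.count a ({a, a, a} : Multiset G) = 3 := by
        simp [Multiset.insert_eq_cons, Multiset.count_cons_self,
          Multiset.count_singleton]
      omega
    · simp [Multiset.count_cons, Multiset.count_singleton, ha]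
  · simp only [Multiset.insert_eq_cons, Multiset.sum_cons, Multiset.sum_singleton,
      Multiset.sum_zero]
    rw [← add_assoc]
    exact hG x

lemma card_T1 (r m : ℕ) : (T1 r m).card
    = ∑ j ∈ (Finset.Icc 1 m).filter (fun j => Odd j), Nat.choose r j := by
  rw [T1, Finset.card_biUnion]
  · refine Finset.sum_congr rfl fun j _ => ?_
    rw [Finset.card_powersetCard, Finset.card_univ, Fintype.card_fin]
  · intro x _ y _ hxy
    rw [Function.onFun, Finset.disjoint_left]
    intro A hA hA2
    exact hxy ((Finset.mem_powersetCard_univ.1 hA).symm.trans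
      (Finset.mem_powersetCard_univ.1 hA2))

lemma card_T2 (r : ℕ) : (T2 r).card = Nat.choose r ((r - 2) / 2) := by
  rw [T2, Finset.card_powersetCard, Finset.card_univ, Fintype.card_fin]

lemma card_Sc (r m : ℕ) : Multiset.card (Sc r m)
    = 2 * (∑ j ∈ (Finset.Icc 1 m).filter (fun j => Odd j), Nat.choose r j)
      + 2 * Nat.choose r ((r - 2) / 2) := by
  rw [Sc, M, Multiset.card_add, Multiset.card_add, Multiset.card_map,
    Multiset.card_map]
  rw [show ((T1 r m).val.card : ℕ) = (T1 r m).card from rfl,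
    show ((T2 r).val.card : ℕ) = (T2 r).card from rfl, card_T1, card_T2]
  ring

end SAWork


/-- Theorem 2(ii)(a): for `r ≥ 5` with `r ≡ 2 (mod 4)` and
`m = ⌊(3r-4)/4⌋`,
`s_A(C_3^r) ≥ 2·Σ_{1 ≤ j ≤ m, j odd} C(r,j) + 2·C(r, (r-2)/2) + 1`. -/
theorem sA_three_lower_two_mod_four (r : ℕ) (hr : 5 ≤ r) (hmod : r % 4 = 2) :
    2 * (∑ j ∈ (Finset.Icc 1 ((3 * r - 4) / 4)).filter (fun j => Odd j),
          Nat.choose r j)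
      + 2 * Nat.choose r ((r - 2) / 2) + 1 ≤ sA (Fin r → ZMod 3) := by
  classical
  have hr6 : 6 ≤ r := by omega
  set m := (3 * r - 4) / 4 with hmdef
  have hm : 4 * m + 6 = 3 * r := by omega
  have hexp : AddMonoid.exponent (Fin r → ZMod 3) = 3 := SAWork.exp_eq (by omega)
  rw [sA]
  apply le_csInf
  · refine ⟨2 * Fintype.card (Fin r → ZMod 3) + 1, fun S hS => ?_⟩
    rw [hexp]
    refine SAWork.pigeonhole ?_ S hS
    intro x
    funext i
    show x i + x i + x i = 0
    have : ∀ a : ZMod 3, a + a + a = 0 := by decide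
    exact this (x i)
  · intro ℓ hℓ
    by_contra hcon
    push_neg at hcon
    have hcard := SAWork.card_Sc r m
    have hle : ℓ ≤ Multiset.card (SAWork.Sc r m) := by omega
    have := hℓ (SAWork.Sc r m) hle
    rw [hexp] at this
    exact SAWork.noW hr6 hm this
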